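/- Suppose functions rᵢⱼ (i ≠ j, symmetric in i,j) satisfy: E_k rᵢⱼ = rᵢₖ rⱼₖ for distinct i,j,k; Σₖ E_k rᵢⱼ = 0 (S̄ rᵢⱼ = 0); and Σₖ uₖ E_k rᵢⱼ = -rᵢⱼ (X̄ rᵢⱼ = -rᵢⱼ), where E_k are derivations and u_k functions with E_k uᵢ = δᵢₖ. Then for i ≠ j with uᵢ ≠ uⱼ: Eᵢ rᵢⱼ = (uⱼ - uᵢ)⁻¹ ( rᵢⱼ + Σ_{k ≠ i,j} (u_k - uⱼ) rᵢₖ rⱼₖ ). -/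
import Mathlib


/-- Lemma 2.5(b) (lem:derRotPrim(b)): if the rotation coefficients satisfy the
Darboux–Egoroff equation `E_k rᵢⱼ = rᵢₖ rⱼₖ` for distinct `i,j,k`, the string
constraint `Σₖ E_k rᵢⱼ = 0`, and the Euler constraint `Σₖ uₖ E_k rᵢⱼ = -rᵢⱼ`,
where the `E_k` are derivations with `E_k uᵢ = δᵢₖ`, then for `i ≠ j` with
`uⱼ - uᵢ` invertible:
`Eᵢ rᵢⱼ = (uⱼ - uᵢ)⁻¹ ( rᵢⱼ + Σ_{k ≠ i,j} (u_k - uⱼ) rᵢₖ rⱼₖ )`. -/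
theorem stmt_19 {R : Type*} [CommRing R]
    (N : ℕ) (E : Fin N → R → R) (u : Fin N → R) (r : Fin N → Fin N → R)
    (hadd : ∀ k : Fin N, ∀ x y : R, E k (x + y) = E k x + E k y)
    (hleib : ∀ k : Fin N, ∀ x y : R, E k (x * y) = x * E k y + y * E k x)
    (hrsymm : ∀ i j : Fin N, r i j = r j i)
    (hDE : ∀ i j k : Fin N, i ≠ j → j ≠ k → i ≠ k →
      E k (r i j) = r i k * r j k)
    (hstring : ∀ i j : Fin N, i ≠ j → ∑ k : Fin N, E k (r i j) = 0)
    (heuler : ∀ i j : Fin N, i ≠ j →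
      ∑ k : Fin N, u k * E k (r i j) = -(r i j))
    (hu : ∀ i k : Fin N, E k (u i) = if i = k then 1 else 0) :
    ∀ i j : Fin N, i ≠ j → IsUnit (u j - u i) →
      E i (r i j) = Ring.inverse (u j - u i) *
        (r i j + ∑ k ∈ (Finset.univ \ {i, j} : Finset (Fin N)),
          (u k - u j) * r i k * r j k) := by
  intro i j hij hunit
  set S : Finset (Fin N) := Finset.univ \ {i, j} with hS
  have hsplit : ∀ f : Fin N → R, ∑ k : Fin N, f k = ∑ k ∈ S, f k + (f i + f j) := by
    intro f
    have hsub : ({i, j} : Finset (Fin N)) ⊆ Finset.univ := Finset.subset_univ _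
    rw [← Finset.sum_sdiff hsub, Finset.sum_pair hij]
  have hmem : ∀ k ∈ S, k ≠ i ∧ k ≠ j := by
    intro k hk
    simp only [hS, Finset.mem_sdiff, Finset.mem_insert, Finset.mem_singleton] at hk
    exact ⟨fun h => hk.2 (Or.inl h), fun h => hk.2 (Or.inr h)⟩
  have hDE' : ∀ k ∈ S, E k (r i j) = r i k * r j k := by
    intro k hk
    exact hDE i j k hij (hmem k hk).2.symm ((hmem k hk).1).symm
  have h1 : ∑ k ∈ S, r i k * r j k + (E i (r i j) + E j (r i j)) = 0 := by
    rw [← Finset.sum_congr rfl hDE', ← hsplit]; exact hstring i j hij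
  have h2 : ∑ k ∈ S, u k * (r i k * r j k) + (u i * E i (r i j) + u j * E j (r i j)) = -(r i j) := by
    have : ∀ k ∈ S, u k * E k (r i j) = u k * (r i k * r j k) := fun k hk => by
      rw [hDE' k hk]
    rw [← Finset.sum_congr rfl this, ← hsplit]; exact heuler i j hij
  have hsum : ∑ k ∈ S, (u k - u j) * r i k * r j k
      = ∑ k ∈ S, u k * (r i k * r j k) - u j * ∑ k ∈ S, r i k * r j k := by
    rw [Finset.mul_sum, ← Finset.sum_sub_distrib]
    exact Finset.sum_congr rfl fun k _ => by ring
  have key : (u j - u i) * E i (r i j) =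
      r i j + ∑ k ∈ S, (u k - u j) * r i k * r j k := by
    linear_combination u j * h1 - h2 - hsum
  calc E i (r i j) = Ring.inverse (u j - u i) * ((u j - u i) * E i (r i j)) :=
        (Ring.inverse_mul_cancel_left _ _ hunit).symm
    _ = _ := by rw [key]
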